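/- Let P ∈ ℤ[X] be a monic polynomial of degree 2d (d ≥ 1) such that every complex root z of P is non-real and satisfies |z| = sqrt(q). Then there exist unique integers c_0, …, c_d and e_1, …, e_d with c_d = 1 such that, in the Laurent polynomial ring ℤ[T, T⁻¹], one has T^d · ( Σ_{i=0}^{d} c_i T^i + Σ_{j=1}^{d} e_j (q T⁻¹)^j ) = P(T). Moreover e_j = c_j for all 1 ≤ j ≤ d. (Thus the symmetric polynomial h(F,V) = Σ c_i F^i + Σ e_j V^j associated to P has integer coefficients: h ∈ ℤ[F,V] with P(X) = X^d · h(X, q/X).) -/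

import Mathlib

open Polynomial in
lemma aux_prod_conj (qc : ℂ) : ∀ (n : ℕ) (R : Multiset ℂ), Multiset.card R = 2 * n →
    R.map (starRingEnd ℂ) = R → (∀ z ∈ R, z.im ≠ 0 ∧ z * (starRingEnd ℂ) z = qc) →
    R.prod = qc ^ n := by
  intro n
  induction n with
  | zero =>
    intro R hc _ _
    have : R = 0 := Multiset.card_eq_zero.mp (by simpa using hc)
    simp [this]
  | succ n ih =>
    intro R hc hconj hz
    have hR0 : R ≠ 0 := by
      intro h; rw [h] at hc; simp at hc
    obtain ⟨z, hzR⟩ := Multiset.exists_mem_of_ne_zero hR0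
    have hcz : (starRingEnd ℂ) z ∈ R := by
      rw [← hconj]; exact Multiset.mem_map_of_mem _ hzR
    have hne : (starRingEnd ℂ) z ≠ z := by
      intro h; exact (hz z hzR).1 (Complex.conj_eq_iff_im.mp h)
    have hcz' : (starRingEnd ℂ) z ∈ R.erase z :=
      (Multiset.mem_erase_of_ne hne).mpr hcz
    set R' := (R.erase z).erase ((starRingEnd ℂ) z) with hR'
    have hcons : R = z ::ₘ (starRingEnd ℂ) z ::ₘ R' := by
      rw [hR', Multiset.cons_erase hcz', Multiset.cons_erase hzR]
    have hcard' : Multiset.card R' = 2 * n := by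
      have := congrArg Multiset.card hcons
      simp at this; omega
    have hmem : ∀ w ∈ R', w ∈ R := fun w hw =>
      Multiset.mem_of_mem_erase (Multiset.mem_of_mem_erase hw)
    have hconj' : R'.map (starRingEnd ℂ) = R' := by
      have hinj : Function.Injective (starRingEnd ℂ) := (starRingEnd ℂ).injective
      rw [hR', Multiset.map_erase _ hinj, Multiset.map_erase _ hinj, hconj,
        Complex.conj_conj, Multiset.erase_comm]
    have := ih R' hcard' hconj' (fun w hw => hz w (hmem w hw))
    rw [hcons, Multiset.prod_cons, Multiset.prod_cons, this, ← mul_assoc,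
      (hz z hzR).2, pow_succ]
    ring

open Polynomial in
lemma key_coeff (q : ℕ) (hq0 : 0 < q) (d : ℕ) (P : Polynomial ℤ) (hmonic : P.Monic)
    (hdeg : P.natDegree = 2 * d)
    (hroots : ∀ z : ℂ, Polynomial.aeval z P = 0 → z.im ≠ 0 ∧ ‖z‖ = Real.sqrt q) :
    ∀ m, m ≤ 2 * d → (q : ℤ) ^ (2 * d - m) * P.coeff (2 * d - m) = (q : ℤ) ^ d * P.coeff m := by
  set Q : Polynomial ℂ := P.map (Int.castRingHom ℂ) with hQ
  have hQmonic : Q.Monic := hmonic.map _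
  have hQdeg : Q.natDegree = 2 * d := by
    rw [hQ, hmonic.natDegree_map, hdeg]
  have hsplits : Q.Splits := IsAlgClosed.splits Q
  set R : Multiset ℂ := Q.roots with hR
  have hcard : Multiset.card R = 2 * d := by
    rw [hR, (Polynomial.splits_iff_card_roots).mp hsplits, hQdeg]
  have hzprop : ∀ z ∈ R, z.im ≠ 0 ∧ z * (starRingEnd ℂ) z = (q : ℂ) := by
    intro z hz
    have hroot : Q.eval z = 0 := by
      exact (Polynomial.mem_roots (hQmonic.ne_zero)).mp hz
    have haev : Polynomial.aeval z P = 0 := by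
      rw [Polynomial.aeval_def, ← Polynomial.eval_map]
      rwa [show algebraMap ℤ ℂ = Int.castRingHom ℂ from rfl]
    obtain ⟨him, habs⟩ := hroots z haev
    refine ⟨him, ?_⟩
    rw [Complex.mul_conj]
    have : Complex.normSq z = (q : ℝ) := by
      have h1 : ‖z‖ ^ 2 = Complex.normSq z := Complex.sq_norm z
      rw [← h1, habs, Real.sq_sqrt (by positivity)]
    rw [this]
    norm_cast
  have hconjR : R.map (starRingEnd ℂ) = R := by
    have hQc : Q.map (starRingEnd ℂ) = Q := by
      ext k
      simp only [Polynomial.coeff_map, hQ]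
      simp [Polynomial.coeff_map]
    have hrm : (Q.map (starRingEnd ℂ)).roots = R.map (starRingEnd ℂ) :=
      hsplits.roots_map _
    rw [← hrm, hQc]
  have hprodR : R.prod = (q : ℂ) ^ d := aux_prod_conj (q : ℂ) d R hcard hconjR hzprop
  have hQprod : Q = (R.map fun z => X - C z).prod :=
    hsplits.eq_prod_roots_of_monic hQmonic
  set F : Polynomial ℂ :=
    (∑ k ∈ Finset.range (2 * d + 1), C ((P.coeff (2 * d - k) : ℂ) * (q:ℂ) ^ (2 * d - k)) * X ^ k)
      - C ((q : ℂ) ^ d) * Q with hF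
  have hFroot : ∀ x : ℂ, x ≠ 0 → F.eval x = 0 := by
    intro x hx
    have hq0' : (q : ℂ) ≠ 0 := by exact_mod_cast hq0.ne'
    have heval : Q.eval x = (R.map fun z => x - z).prod := by
      rw [hQprod, Polynomial.eval_multiset_prod, Multiset.map_map]
      congr 1
      refine Multiset.map_congr rfl fun z _ => by simp
    have heval' : Q.eval ((q : ℂ) / x) = (R.map fun z => (q : ℂ) / x - z).prod := by
      rw [hQprod, Polynomial.eval_multiset_prod, Multiset.map_map]
      congr 1
      refine Multiset.map_congr rfl fun z _ => by simp
    have key : x ^ (2 * d) * Q.eval ((q : ℂ) / x) = (q : ℂ) ^ d * Q.eval x := by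
      have hxpow : x ^ (2 * d) = (R.map fun _ => x).prod := by
        rw [Multiset.map_const', Multiset.prod_replicate, hcard]
      rw [heval', heval, hxpow, ← Multiset.prod_map_mul]
      have step1 : (R.map fun z => x * ((q : ℂ) / x - z)).prod
          = (R.map fun z => (-z) * (x - (starRingEnd ℂ) z)).prod := by
        congr 1
        refine Multiset.map_congr rfl fun z hzz => ?_
        have h2 := (hzprop z hzz).2
        have hstep : x * ((q : ℂ) / x - z) = (q : ℂ) - z * x := by field_simp
        rw [hstep, ← h2]
        ring
      rw [step1, Multiset.prod_map_mul]
      congr 1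
      · have : (R.map fun z => -z).prod = (-1 : ℂ) ^ (2 * d) * R.prod := by
          have := Multiset.prod_map_mul (m := R) (f := fun _ => (-1 : ℂ)) (g := fun z => z)
          simp only [neg_one_mul] at this
          rw [this, Multiset.map_const', Multiset.prod_replicate, hcard, Multiset.map_id']
        rw [this, hprodR]
        simp [pow_mul]
      · conv_rhs => rw [← hconjR, Multiset.map_map]
        simp [Function.comp_def]
    have hevalQ : ∀ y : ℂ, Q.eval y = ∑ k ∈ Finset.range (2 * d + 1), (P.coeff k : ℂ) * y ^ k := by
      intro y
      rw [Polynomial.eval_eq_sum_range' (by omega : Q.natDegree < 2 * d + 1)]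
      refine Finset.sum_congr rfl fun k _ => ?_
      simp [hQ, Polynomial.coeff_map]
    have hsum : F.eval x = (∑ k ∈ Finset.range (2 * d + 1),
        (P.coeff (2 * d - k) : ℂ) * (q:ℂ) ^ (2 * d - k) * x ^ k) - (q : ℂ) ^ d * Q.eval x := by
      simp [hF, Polynomial.eval_finset_sum]
    rw [hsum, ← key, hevalQ]
    rw [Finset.mul_sum]
    rw [show (∑ k ∈ Finset.range (2 * d + 1),
        (P.coeff (2 * d - k) : ℂ) * (q:ℂ) ^ (2 * d - k) * x ^ k)
      = ∑ k ∈ Finset.range (2 * d + 1),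
        (P.coeff (2*d - (2*d - k)) : ℂ) * (q:ℂ) ^ (2*d - (2*d-k)) * x ^ (2*d - k) from ?_]
    · rw [sub_eq_zero]
      refine Finset.sum_congr rfl fun k hk => ?_
      have hk' : k ≤ 2 * d := by simpa [Nat.lt_succ_iff] using hk
      rw [show 2 * d - (2 * d - k) = k by omega]
      rw [div_pow, show x ^ (2*d) = x ^ (2*d - k) * x ^ k by rw [← pow_add]; congr 1; omega]
      field_simp
      try ring
    · have := Finset.sum_range_reflect
        (fun k => (P.coeff (2*d - k) : ℂ) * (q:ℂ) ^ (2*d - k) * x ^ k) (2 * d + 1)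
      simp only [Nat.add_sub_cancel] at this
      rw [← this]
  have hF0 : F = 0 := by
    apply Polynomial.eq_zero_of_infinite_isRoot
    have hinf : ({(0 : ℂ)}ᶜ : Set ℂ).Infinite :=
      Set.Finite.infinite_compl (Set.finite_singleton 0)
    exact hinf.mono (fun x hx => hFroot x hx)
  intro m hm
  have hco := congrArg (fun G => Polynomial.coeff G m) hF0
  simp only [hF, Polynomial.coeff_sub, Polynomial.coeff_zero, Polynomial.finset_sum_coeff,
    Polynomial.coeff_C_mul, Polynomial.coeff_X_pow, Polynomial.coeff_map, sub_eq_zero] at hco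
  rw [Finset.sum_eq_single m] at hco
  · rw [if_pos rfl, mul_one] at hco
    rw [hQ, Polynomial.coeff_map] at hco
    simp only [eq_intCast] at hco
    have hco2 : ((q:ℂ) ^ (2*d - m) * (P.coeff (2*d - m) : ℂ)) = (q:ℂ) ^ d * (P.coeff m : ℂ) := by
      rw [mul_comm ((q:ℂ) ^ (2*d - m))]
      exact hco
    exact_mod_cast hco2
  · intro b _ hb
    simp [Ne.symm hb]
  · intro hmem
    exact absurd (Finset.mem_range.mpr (by omega)) hmem

open LaurentPolynomial in
lemma laurent_lhs (q d : ℕ) (c : Fin (d+1) → ℤ) (e : Fin d → ℤ) :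
    T (d : ℤ) *
        ((∑ i : Fin (d + 1), C (c i) * T ((i : ℕ) : ℤ)) +
          ∑ j : Fin d, C (e j) * ((q : LaurentPolynomial ℤ) * T (-1)) ^ ((j : ℕ) + 1)) =
    (∑ i : Fin (d + 1), AddMonoidAlgebra.single ((d : ℤ) + (i : ℕ)) (c i)) +
      ∑ j : Fin d, AddMonoidAlgebra.single ((d : ℤ) - 1 - (j : ℕ)) (e j * (q : ℤ) ^ ((j : ℕ) + 1)) := by
  rw [mul_add, Finset.mul_sum, Finset.mul_sum]
  congr 1
  · refine Finset.sum_congr rfl fun i _ => ?_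
    rw [single_eq_C_mul_T, T_add]
    ring
  · refine Finset.sum_congr rfl fun j _ => ?_
    rw [single_eq_C_mul_T,
      show ((q : ℕ) : LaurentPolynomial ℤ) = C ((q : ℤ)) from by simp,
      mul_pow, ← map_pow, T_pow, map_mul,
      show ((d : ℤ) - 1 - ((j : ℕ) : ℤ)) = (d : ℤ) + (((j : ℕ) + 1 : ℕ) : ℤ) * (-1) from by
        push_cast; ring,
      T_add]
    ring

open LaurentPolynomial in
lemma toLaurent_eq_sum (P : Polynomial ℤ) :
    Polynomial.toLaurent P =
      ∑ k ∈ Finset.range (P.natDegree + 1), AddMonoidAlgebra.single ((k : ℕ) : ℤ) (P.coeff k) := by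
  conv_lhs => rw [P.as_sum_range' (P.natDegree + 1) (lt_add_one _)]
  rw [map_sum]
  refine Finset.sum_congr rfl fun k _ => ?_
  rw [Polynomial.toLaurent_C_mul_T, single_eq_C_mul_T]

open LaurentPolynomial in
lemma singles_ext (d : ℕ) (c c' : Fin (d+1) → ℤ) (f f' : Fin d → ℤ)
    (h : ((∑ i : Fin (d + 1), AddMonoidAlgebra.single ((d : ℤ) + (i : ℕ)) (c i)) +
          ∑ j : Fin d, AddMonoidAlgebra.single ((d : ℤ) - 1 - (j : ℕ)) (f j) : LaurentPolynomial ℤ) =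
        (∑ i : Fin (d + 1), AddMonoidAlgebra.single ((d : ℤ) + (i : ℕ)) (c' i)) +
          ∑ j : Fin d, AddMonoidAlgebra.single ((d : ℤ) - 1 - (j : ℕ)) (f' j)) :
    c = c' ∧ f = f' := by
  have key : ∀ n : ℤ,
      ((∑ i : Fin (d + 1), AddMonoidAlgebra.single ((d : ℤ) + (i : ℕ)) (c i)) +
          ∑ j : Fin d, AddMonoidAlgebra.single ((d : ℤ) - 1 - (j : ℕ)) (f j) : LaurentPolynomial ℤ).coeff n =
      ((∑ i : Fin (d + 1), AddMonoidAlgebra.single ((d : ℤ) + (i : ℕ)) (c' i)) +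
          ∑ j : Fin d, AddMonoidAlgebra.single ((d : ℤ) - 1 - (j : ℕ)) (f' j) : LaurentPolynomial ℤ).coeff n :=
    fun n => by rw [h]
  constructor
  · funext i0
    have hn := key ((d : ℤ) + (i0 : ℕ))
    simp only [AddMonoidAlgebra.coeff_add, AddMonoidAlgebra.coeff_sum,
      AddMonoidAlgebra.coeff_single] at hn
    rw [Finsupp.add_apply, Finsupp.add_apply, Finset.sum_apply', Finset.sum_apply',
      Finset.sum_apply', Finset.sum_apply'] at hn
    have hz : ∀ (g : Fin d → ℤ), (∑ j : Fin d,
        (Finsupp.single ((d : ℤ) - 1 - (j : ℕ)) (g j) : ℤ →₀ ℤ)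
          ((d : ℤ) + (i0 : ℕ))) = 0 := by
      intro g
      refine Finset.sum_eq_zero fun j _ => ?_
      rw [Finsupp.single_apply, if_neg (by omega)]
    rw [hz, hz, add_zero, add_zero] at hn
    have hs : ∀ (g : Fin (d+1) → ℤ), (∑ i : Fin (d + 1),
        (Finsupp.single ((d : ℤ) + (i : ℕ)) (g i) : ℤ →₀ ℤ)
          ((d : ℤ) + (i0 : ℕ))) = g i0 := by
      intro g
      rw [Finset.sum_eq_single i0]
      · rw [Finsupp.single_apply, if_pos rfl]
      · intro i _ hi
        rw [Finsupp.single_apply, if_neg]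
        intro hc
        apply hi
        have : ((i : ℕ) : ℤ) = ((i0 : ℕ) : ℤ) := by omega
        exact Fin.ext (by exact_mod_cast this)
      · intro hmem
        exact absurd (Finset.mem_univ i0) hmem
    rw [hs, hs] at hn
    exact hn
  · funext j0
    have hn := key ((d : ℤ) - 1 - (j0 : ℕ))
    simp only [AddMonoidAlgebra.coeff_add, AddMonoidAlgebra.coeff_sum,
      AddMonoidAlgebra.coeff_single] at hn
    rw [Finsupp.add_apply, Finsupp.add_apply, Finset.sum_apply', Finset.sum_apply',
      Finset.sum_apply', Finset.sum_apply'] at hn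
    have hz : ∀ (g : Fin (d+1) → ℤ), (∑ i : Fin (d + 1),
        (Finsupp.single ((d : ℤ) + (i : ℕ)) (g i) : ℤ →₀ ℤ)
          ((d : ℤ) - 1 - (j0 : ℕ))) = 0 := by
      intro g
      refine Finset.sum_eq_zero fun i _ => ?_
      rw [Finsupp.single_apply, if_neg (by omega)]
    rw [hz, hz] at hn
    have hs : ∀ (g : Fin d → ℤ), (∑ j : Fin d,
        (Finsupp.single ((d : ℤ) - 1 - (j : ℕ)) (g j) : ℤ →₀ ℤ)
          ((d : ℤ) - 1 - (j0 : ℕ))) = g j0 := by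
      intro g
      rw [Finset.sum_eq_single j0]
      · rw [Finsupp.single_apply, if_pos rfl]
      · intro j _ hj
        rw [Finsupp.single_apply, if_neg]
        intro hc
        apply hj
        have : ((j : ℕ) : ℤ) = ((j0 : ℕ) : ℤ) := by omega
        exact Fin.ext (by exact_mod_cast this)
      · intro hmem
        exact absurd (Finset.mem_univ j0) hmem
    rw [hs, hs] at hn
    simpa using hn

open LaurentPolynomial in
lemma main_sum (q d : ℕ) (P : Polynomial ℤ) (hdeg : P.natDegree = 2 * d)
    (hlow : ∀ j : ℕ, j < d → P.coeff (d + 1 + j) * (q : ℤ) ^ (j + 1) = P.coeff (d - 1 - j)) :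
    ((∑ i : Fin (d + 1), AddMonoidAlgebra.single ((d : ℤ) + (i : ℕ)) (P.coeff (d + (i : ℕ)))) +
      ∑ j : Fin d, AddMonoidAlgebra.single ((d : ℤ) - 1 - (j : ℕ))
        (P.coeff (d + 1 + (j : ℕ)) * (q : ℤ) ^ ((j : ℕ) + 1)) : LaurentPolynomial ℤ) =
    Polynomial.toLaurent P := by
  rw [toLaurent_eq_sum, hdeg]
  rw [show 2 * d + 1 = d + (d + 1) by omega, Finset.sum_range_add]
  rw [add_comm (∑ i ∈ Finset.range d, _)]
  congr 1
  · rw [Fin.sum_univ_eq_sum_range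
      (fun i => AddMonoidAlgebra.single ((d : ℤ) + i) (P.coeff (d + i))) (d + 1)]
    refine Finset.sum_congr rfl fun i _ => ?_
    congr 1 <;> omega
  · rw [Fin.sum_univ_eq_sum_range
      (fun j => AddMonoidAlgebra.single ((d : ℤ) - 1 - j) (P.coeff (d + 1 + j) * (q : ℤ) ^ (j + 1))) d]
    rw [← Finset.sum_range_reflect (fun k => AddMonoidAlgebra.single ((k : ℕ) : ℤ) (P.coeff k)) d]
    refine Finset.sum_congr rfl fun j hj => ?_
    have hj' : j < d := Finset.mem_range.mp hj
    rw [hlow j hj']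
    congr 1 <;> omega

open LaurentPolynomial in
/-- The defining property of the coefficient data `(c, e)` of the symmetric polynomial
associated to `P`: `c_d = 1` and
`T^d * (Σ_{i=0}^{d} c_i T^i + Σ_{j=1}^{d} e_j (q T⁻¹)^j) = P(T)` in `ℤ[T, T⁻¹]`,
where `e j` encodes `e_{j+1}`. -/
def SymmetricCoeffData (q d : ℕ) (P : Polynomial ℤ)
    (ce : (Fin (d + 1) → ℤ) × (Fin d → ℤ)) : Prop :=
  ce.1 (Fin.last d) = 1 ∧
    T (d : ℤ) *
        ((∑ i : Fin (d + 1), C (ce.1 i) * T ((i : ℕ) : ℤ)) +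
          ∑ j : Fin d, C (ce.2 j) * ((q : LaurentPolynomial ℤ) * T (-1)) ^ ((j : ℕ) + 1)) =
      Polynomial.toLaurent P

/-- Let `P ∈ ℤ[X]` be monic of degree `2d` (`d ≥ 1`) all of whose complex roots are non-real
of absolute value `√q`.  Then there exist unique integers `c_0, …, c_d` and `e_1, …, e_d`
with `c_d = 1` such that in `ℤ[T, T⁻¹]` one has
`T^d * (Σ_{i=0}^d c_i T^i + Σ_{j=1}^d e_j (q T⁻¹)^j) = P(T)`; moreover `e_j = c_j` for all
`1 ≤ j ≤ d`.  (Thus the symmetric polynomial `h(F, V)` associated to `P` has integer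
coefficients and satisfies `P(X) = X^d · h(X, q/X)`.) -/
theorem stmt_3 (p r : ℕ) (hp : p.Prime) (hr : 1 ≤ r) (q : ℕ) (hq : q = p ^ r)
    (d : ℕ) (hd : 1 ≤ d) (P : Polynomial ℤ) (hmonic : P.Monic) (hdeg : P.natDegree = 2 * d)
    (hroots : ∀ z : ℂ, Polynomial.aeval z P = 0 →
      z.im ≠ 0 ∧ ‖z‖ = Real.sqrt q) :
    (∃! ce : (Fin (d + 1) → ℤ) × (Fin d → ℤ), SymmetricCoeffData q d P ce) ∧
    (∀ ce : (Fin (d + 1) → ℤ) × (Fin d → ℤ), SymmetricCoeffData q d P ce →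
      ∀ j : Fin d, ce.2 j = ce.1 j.succ) := by
  have hq0 : 0 < q := by rw [hq]; exact pow_pos hp.pos r
  have hqz : (q : ℤ) ≠ 0 := by exact_mod_cast hq0.ne'
  have key := key_coeff q hq0 d P hmonic hdeg hroots
  have hlow : ∀ j : ℕ, j < d →
      P.coeff (d + 1 + j) * (q : ℤ) ^ (j + 1) = P.coeff (d - 1 - j) := by
    intro j hj
    have h := key (d - 1 - j) (by omega)
    rw [show 2*d - (d - 1 - j) = d + 1 + j by omega] at h
    rw [show (q:ℤ) ^ (d + 1 + j) = (q:ℤ) ^ d * (q:ℤ) ^ (j + 1) from by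
      rw [← pow_add]; congr 1; omega, mul_assoc] at h
    have h2 := mul_left_cancel₀ (pow_ne_zero d hqz) h
    rw [← h2]; ring
  set ce0 : (Fin (d + 1) → ℤ) × (Fin d → ℤ) :=
    (fun i => P.coeff (d + (i : ℕ)), fun j => P.coeff (d + 1 + (j : ℕ))) with hce0
  have hce0data : SymmetricCoeffData q d P ce0 := by
    constructor
    · show P.coeff (d + ((Fin.last d : Fin (d+1)) : ℕ)) = 1
      rw [Fin.val_last, show d + d = 2 * d by ring, ← hdeg]
      exact hmonic.coeff_natDegree
    · rw [laurent_lhs]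
      exact main_sum q d P hdeg hlow
  have huniq : ∀ ce : (Fin (d + 1) → ℤ) × (Fin d → ℤ),
      SymmetricCoeffData q d P ce → ce = ce0 := by
    intro ce hce
    have h2 := hce.2.trans hce0data.2.symm
    rw [laurent_lhs, laurent_lhs] at h2
    obtain ⟨hc, hf⟩ := singles_ext d _ _ _ _ h2
    have hsnd : ce.2 = ce0.2 := by
      funext j
      have := congrFun hf j
      exact mul_right_cancel₀ (pow_ne_zero _ hqz) this
    exact Prod.ext hc hsnd
  refine ⟨⟨ce0, hce0data, huniq⟩, ?_⟩
  intro ce hce j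
  rw [huniq ce hce]
  show P.coeff (d + 1 + (j : ℕ)) = P.coeff (d + ((j.succ : Fin (d+1)) : ℕ))
  rw [Fin.val_succ]
  congr 1
  omega
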